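/- In the setting of the union-revenue lemma (H a τ-subgraph-plus with R(H) ≤ r and at most SMALL constraints; H' a τ-subgraph with at most SMALL constraints and at most s leaves not in H; r + s ≤ ζ·SMALL; Plausibility Assumption holds), suppose additionally that H' has b edges each having exactly one endpoint in H (boundary edges). Then R(H ∪ H') ≤ r + s − b. -/
import Mathlib


open scoped Classical
open Finset

namespace CSP

variable {Cn Vr : Type*} [Fintype Cn] [Fintype Vr] [DecidableEq Cn] [DecidableEq Vr]

/-- Constraint-vertices of an edge-induced subgraph (given as a set of edges). -/
def consOf (H : Finset (Cn × Vr)) : Finset Cn := H.image Prod.fst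

/-- Variable-vertices of an edge-induced subgraph. -/
def vbls (H : Finset (Cn × Vr)) : Finset Vr := H.image Prod.snd

/-- Degree of a constraint-vertex within `H`. -/
def degC (H : Finset (Cn × Vr)) (f : Cn) : ℕ := (H.filter fun e => e.1 = f).card

/-- Degree of a variable-vertex within `H`. -/
def degV (H : Finset (Cn × Vr)) (v : Vr) : ℕ := (H.filter fun e => e.2 = v).card

/-- Leaf variable-vertices: those of degree exactly 1. -/
def leaves (H : Finset (Cn × Vr)) : Finset Vr := (vbls H).filter fun v => degV H v = 1

/-- Revenue: one credit per leaf variable-vertex, minus a debit for each excess edge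
(edges beyond 2 at a variable-vertex, beyond `τ` at a constraint-vertex). -/
def revenue (τ : ℕ) (H : Finset (Cn × Vr)) : ℝ :=
  ((leaves H).card : ℝ)
    - (((∑ v ∈ vbls H, (degV H v - 2)) + ∑ f ∈ consOf H, (degC H f - τ) : ℕ) : ℝ)

/-- A `τ`-subgraph: every constraint-vertex has degree at least `τ`. -/
def IsTau (τ : ℕ) (H : Finset (Cn × Vr)) : Prop := ∀ f ∈ consOf H, τ ≤ degC H f

/-- Plausibility: income `R(H) - ζ·|consOf H|` is nonnegative. -/
def Plausible (τ : ℕ) (ζ : ℝ) (H : Finset (Cn × Vr)) : Prop :=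
  ζ * ((consOf H).card : ℝ) ≤ revenue τ H

/-- The Plausibility Assumption for a factor graph with edge set `E`. -/
def PlausibilityAssumption (τ : ℕ) (ζ : ℝ) (SMALL : ℕ) (E : Finset (Cn × Vr)) : Prop :=
  ∀ H ⊆ E, IsTau τ H → (consOf H).card ≤ 2 * SMALL → Plausible τ ζ H

/-- `S`-closed: a `τ`-subgraph all of whose leaf variable-vertices lie in `S`. -/
def SClosed (τ : ℕ) (S : Finset Vr) (H : Finset (Cn × Vr)) : Prop :=
  IsTau τ H ∧ leaves H ⊆ S

/-- The closure of `S`: the union of all small `S`-closed `τ`-subgraphs of `E`. -/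
noncomputable def closure (τ SMALL : ℕ) (E : Finset (Cn × Vr)) (S : Finset Vr) :
    Finset (Cn × Vr) :=
  (E.powerset.filter fun H => SClosed τ S H ∧ (consOf H).card ≤ SMALL).sup id

end CSP

open CSP

/-- Revenue of a τ-subgraph-plus: the τ-subgraph `H` together with a set `W` of isolated
variable-vertices, each isolated vertex contributing 2 credits. -/
noncomputable def revenuePlus {Cn Vr : Type*} [Fintype Cn] [Fintype Vr]
    [DecidableEq Cn] [DecidableEq Vr] (τ : ℕ) (H : Finset (Cn × Vr)) (W : Finset Vr) : ℝ :=
  revenue τ H + 2 * (W.card : ℝ)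

section Aux

variable {Cn Vr : Type*} [Fintype Cn] [Fintype Vr] [DecidableEq Cn] [DecidableEq Vr]

lemma degV_union_sdiff (H H' : Finset (Cn × Vr)) (v : Vr) :
    degV (H ∪ H') v = degV H v + degV (H' \ H) v := by
  unfold degV
  rw [← Finset.card_union_of_disjoint
      (Finset.disjoint_filter_filter Finset.disjoint_sdiff),
    ← Finset.filter_union, Finset.union_sdiff_self_eq_union]

lemma degC_union_sdiff (H H' : Finset (Cn × Vr)) (f : Cn) :
    degC (H ∪ H') f = degC H f + degC (H' \ H) f := by
  unfold degC
  rw [← Finset.card_union_of_disjoint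
      (Finset.disjoint_filter_filter Finset.disjoint_sdiff),
    ← Finset.filter_union, Finset.union_sdiff_self_eq_union]

lemma degV_eq_zero_of_notMem {H : Finset (Cn × Vr)} {v : Vr} (h : v ∉ vbls H) :
    degV H v = 0 := by
  rw [degV, Finset.card_eq_zero, Finset.filter_eq_empty_iff]
  intro e he hev
  exact h (Finset.mem_image.2 ⟨e, he, hev⟩)

lemma degC_eq_zero_of_notMem {H : Finset (Cn × Vr)} {f : Cn} (h : f ∉ consOf H) :
    degC H f = 0 := by
  rw [degC, Finset.card_eq_zero, Finset.filter_eq_empty_iff]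
  intro e he hef
  exact h (Finset.mem_image.2 ⟨e, he, hef⟩)

lemma one_le_degV_of_mem {H : Finset (Cn × Vr)} {v : Vr} (h : v ∈ vbls H) :
    1 ≤ degV H v := by
  obtain ⟨e, he, rfl⟩ := Finset.mem_image.1 h
  exact Finset.card_pos.2 ⟨e, Finset.mem_filter.2 ⟨he, rfl⟩⟩

lemma degV_mono {H H' : Finset (Cn × Vr)} (h : H ⊆ H') (v : Vr) :
    degV H v ≤ degV H' v :=
  Finset.card_le_card (Finset.filter_subset_filter _ h)

end Aux

/-- Boundary-edge revenue loss: in the setting of the union-revenue lemma, if `H'` has `b`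
edges with exactly one endpoint in the τ-subgraph-plus `(H, W)`, then the revenue of the
union is at most `r + s − b`. -/
theorem stmt_8 {Cn Vr : Type*} [Fintype Cn] [Fintype Vr] [DecidableEq Cn] [DecidableEq Vr]
    (τ SMALL : ℕ) (hτ : 3 ≤ τ) (hSMALL : 1 ≤ SMALL)
    (ζ : ℝ) (hζ0 : 0 < ζ) (hζ1 : ζ < 1)
    (E : Finset (Cn × Vr)) (hPA : PlausibilityAssumption τ ζ SMALL E)
    (r : ℝ) (s b : ℕ)
    (H : Finset (Cn × Vr)) (W : Finset Vr)
    (hHE : H ⊆ E) (hHtau : IsTau τ H) (hW : Disjoint W (vbls H))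
    (hHsmall : (consOf H).card ≤ SMALL) (hHrev : revenuePlus τ H W ≤ r)
    (H' : Finset (Cn × Vr)) (hH'E : H' ⊆ E) (hH'tau : IsTau τ H')
    (hH'small : (consOf H').card ≤ SMALL)
    (hleaves : ((leaves H') \ (vbls H ∪ W)).card ≤ s)
    (hrs : r + (s : ℝ) ≤ ζ * SMALL)
    (hb : b = (H'.filter fun e => Xor' (e.1 ∈ consOf H) (e.2 ∈ vbls H ∪ W)).card) :
    revenuePlus τ (H ∪ H') (W \ vbls (H ∪ H')) ≤ r + (s : ℝ) - (b : ℝ) := by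
  classical
  set U := H ∪ H' with hUdef
  set B := H' \ H with hBdef
  set Bd := H'.filter (fun e => Xor' (e.1 ∈ consOf H) (e.2 ∈ vbls H ∪ W)) with hBddef
  set Bd1 := Bd.filter (fun e => e.1 ∈ consOf H) with hBd1def
  set Bd2 := Bd.filter (fun e => ¬ e.1 ∈ consOf H) with hBd2def
  set L := leaves H' \ (vbls H ∪ W) with hLdef
  have hHU : H ⊆ U := Finset.subset_union_left
  have hH'U : H' ⊆ U := Finset.subset_union_right
  have hBU : B ⊆ U := fun e he => hH'U (Finset.mem_sdiff.1 he).1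
  have hvblsU : vbls U = vbls H ∪ vbls H' := by
    rw [hUdef, vbls, Finset.image_union]; rfl
  have hvHsub : vbls H ⊆ vbls U := hvblsU ▸ Finset.subset_union_left
  have hconsHsub : consOf H ⊆ consOf U := Finset.image_subset_image hHU
  -- membership facts for boundary-edge classes
  have hBd1_sub : ∀ e ∈ Bd1, e ∈ B ∧ e.1 ∈ consOf H ∧ e.2 ∉ vbls H ∪ W := by
    intro e he
    rw [hBd1def, Finset.mem_filter, hBddef, Finset.mem_filter] at he
    obtain ⟨⟨heH', hxor⟩, h1⟩ := he
    have h2 : e.2 ∉ vbls H ∪ W := by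
      rcases hxor with ⟨_, hnb⟩ | ⟨_, hna⟩
      · exact hnb
      · exact absurd h1 hna
    have heB : e ∈ B := by
      rw [hBdef, Finset.mem_sdiff]
      refine ⟨heH', fun heH => h2 (Finset.mem_union_left _ (Finset.mem_image.2 ⟨e, heH, rfl⟩))⟩
    exact ⟨heB, h1, h2⟩
  have hBd2_sub : ∀ e ∈ Bd2, e ∈ B ∧ e.2 ∈ vbls H ∪ W := by
    intro e he
    rw [hBd2def, Finset.mem_filter, hBddef, Finset.mem_filter] at he
    obtain ⟨⟨heH', hxor⟩, h1⟩ := he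
    have h2 : e.2 ∈ vbls H ∪ W := by
      rcases hxor with ⟨ha, _⟩ | ⟨hb', _⟩
      · exact absurd ha h1
      · exact hb'
    have heB : e ∈ B := by
      rw [hBdef, Finset.mem_sdiff]
      exact ⟨heH', fun heH => h1 (Finset.mem_image.2 ⟨e, heH, rfl⟩)⟩
    exact ⟨heB, h2⟩
  have hb12 : b = Bd1.card + Bd2.card := by
    rw [hb]
    exact (Finset.card_filter_add_card_filter_not
      (p := fun e : Cn × Vr => e.1 ∈ consOf H)).symm
  have hfib1 : Bd1.card = ∑ f ∈ consOf U, (Bd1.filter fun e => e.1 = f).card :=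
    Finset.card_eq_sum_card_fiberwise (fun e he => hconsHsub (hBd1_sub e he).2.1)
  have hfib2 : Bd2.card = ∑ v ∈ vbls U, (Bd2.filter fun e => e.2 = v).card :=
    Finset.card_eq_sum_card_fiberwise
      (fun e he => Finset.mem_image.2 ⟨e, hBU (hBd2_sub e he).1, rfl⟩)
  -- pointwise constraint inequality
  have hcons : ∀ f ∈ consOf U,
      degC H f - τ + (Bd1.filter fun e => e.1 = f).card ≤ degC U f - τ := by
    intro f _
    have hdec : degC U f = degC H f + degC B f := by
      rw [hUdef, hBdef]; exact degC_union_sdiff H H' f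
    have hle : (Bd1.filter fun e => e.1 = f).card ≤ degC B f := by
      refine Finset.card_le_card fun e he => ?_
      obtain ⟨he1, he2⟩ := Finset.mem_filter.1 he
      exact Finset.mem_filter.2 ⟨(hBd1_sub e he1).1, he2⟩
    rcases Finset.eq_empty_or_nonempty (Bd1.filter fun e => e.1 = f) with hemp | ⟨e, he⟩
    · rw [hemp, Finset.card_empty]
      have : degC H f ≤ degC U f := hdec ▸ Nat.le_add_right _ _
      omega
    · obtain ⟨he1, he2⟩ := Finset.mem_filter.1 he
      have hfH : f ∈ consOf H := he2 ▸ (hBd1_sub e he1).2.1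
      have hτf := hHtau f hfH
      omega
  -- pointwise variable inequality (over ℤ)
  have hvar : ∀ v ∈ vbls U,
      ((if degV U v = 1 then (1 : ℤ) else 0) - ((degV U v - 2 : ℕ) : ℤ))
        ≤ ((if degV H v = 1 then (1 : ℤ) else 0) - ((degV H v - 2 : ℕ) : ℤ))
            + 2 * (if v ∈ W then (1 : ℤ) else 0)
            + (if v ∈ L then (1 : ℤ) else 0)
            - ((Bd2.filter fun e => e.2 = v).card : ℤ) := by
    intro v hv
    have hdec : degV U v = degV H v + degV B v := by
      rw [hUdef, hBdef]; exact degV_union_sdiff H H' v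
    have hbv : (Bd2.filter fun e => e.2 = v).card ≤ degV B v := by
      refine Finset.card_le_card fun e he => ?_
      obtain ⟨he1, he2⟩ := Finset.mem_filter.1 he
      exact Finset.mem_filter.2 ⟨(hBd2_sub e he1).1, he2⟩
    have hUpos : 1 ≤ degV U v := one_le_degV_of_mem hv
    by_cases hvH : v ∈ vbls H
    · have h1 : 1 ≤ degV H v := one_le_degV_of_mem hvH
      have hvW : v ∉ W := fun hw => (Finset.disjoint_left.1 hW hw) hvH
      have hvL : v ∉ L := by
        rw [hLdef, Finset.mem_sdiff]
        exact fun h => h.2 (Finset.mem_union_left _ hvH)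
      rw [if_neg hvW, if_neg hvL]
      split_ifs <;> omega
    · have h0 : degV H v = 0 := degV_eq_zero_of_notMem hvH
      by_cases hvW : v ∈ W
      · have hvL : v ∉ L := by
          rw [hLdef, Finset.mem_sdiff]
          exact fun h => h.2 (Finset.mem_union_right _ hvW)
        rw [if_pos hvW, if_neg hvL]
        split_ifs <;> omega
      · have hbv0 : (Bd2.filter fun e => e.2 = v).card = 0 := by
          rw [Finset.card_eq_zero, Finset.filter_eq_empty_iff]
          intro e he1 he2
          have h2 := (hBd2_sub e he1).2
          rw [he2] at h2
          rcases Finset.mem_union.1 h2 with h | h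
          · exact hvH h
          · exact hvW h
        rw [if_neg hvW, hbv0]
        by_cases hone : degV U v = 1
        · have hvH' : v ∈ vbls H' := by
            rcases Finset.mem_union.1 (hvblsU ▸ hv) with h | h
            · exact absurd h hvH
            · exact h
          have hle' : degV H' v ≤ degV U v := by rw [hUdef]; exact degV_mono hH'U v
          have hge' : 1 ≤ degV H' v := one_le_degV_of_mem hvH'
          have hL : v ∈ L := by
            rw [hLdef, Finset.mem_sdiff]
            refine ⟨Finset.mem_filter.2 ⟨hvH', by omega⟩, ?_⟩
            intro h
            rcases Finset.mem_union.1 h with h | h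
            · exact hvH h
            · exact hvW h
          rw [if_pos hL, if_pos hone]
          omega
        · rw [if_neg hone]
          split_ifs <;> omega
  -- summed variable inequality
  have key := Finset.sum_le_sum hvar
  simp only [Finset.sum_sub_distrib, Finset.sum_add_distrib, ← Finset.mul_sum] at key
  -- component identifications
  have e1 : ((leaves U).card : ℤ)
      = ∑ v ∈ vbls U, (if degV U v = 1 then (1 : ℤ) else 0) := by
    rw [leaves, Finset.card_filter]
    push_cast
    rfl
  have e2 : ((leaves H).card : ℤ)
      = ∑ v ∈ vbls U, (if degV H v = 1 then (1 : ℤ) else 0) := by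
    rw [leaves, Finset.card_filter]
    push_cast
    refine Finset.sum_subset hvHsub fun v _ hv => ?_
    simp [degV_eq_zero_of_notMem hv]
  have e3 : ((∑ v ∈ vbls H, (degV H v - 2) : ℕ) : ℤ)
      = ∑ v ∈ vbls U, ((degV H v - 2 : ℕ) : ℤ) := by
    push_cast
    refine Finset.sum_subset hvHsub fun v _ hv => ?_
    simp [degV_eq_zero_of_notMem hv]
  have e4 : ((∑ v ∈ vbls U, (degV U v - 2) : ℕ) : ℤ)
      = ∑ v ∈ vbls U, ((degV U v - 2 : ℕ) : ℤ) := by push_cast; rfl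
  have e5 : ∑ v ∈ vbls U, (if v ∈ W then (1 : ℤ) else 0)
      = ((W ∩ vbls U).card : ℤ) := by
    rw [Finset.sum_boole, Finset.filter_mem_eq_inter, Finset.inter_comm]
  have e6 : ∑ v ∈ vbls U, (if v ∈ L then (1 : ℤ) else 0) ≤ (L.card : ℤ) := by
    rw [Finset.sum_boole, Finset.filter_mem_eq_inter]
    exact_mod_cast Finset.card_le_card (Finset.inter_subset_right)
  have e7 : ∑ v ∈ vbls U, ((Bd2.filter fun e => e.2 = v).card : ℤ) = (Bd2.card : ℤ) := by
    rw [hfib2]; push_cast; rfl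
  -- summed constraint inequality
  have ckey := Finset.sum_le_sum hcons
  rw [Finset.sum_add_distrib, ← hfib1] at ckey
  have c1 : (∑ f ∈ consOf H, (degC H f - τ) : ℕ) = ∑ f ∈ consOf U, (degC H f - τ) := by
    refine Finset.sum_subset hconsHsub fun f _ hf => ?_
    simp [degC_eq_zero_of_notMem hf]
  -- master integer inequality
  have hWsplit : (W ∩ vbls U).card + (W \ vbls U).card = W.card :=
    Finset.card_inter_add_card_sdiff W (vbls U)
  -- pass to the reals
  rw [revenuePlus, revenue] at hHrev ⊢
  have keyR : ((leaves U).card : ℝ)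
      - ((∑ v ∈ vbls U, (degV U v - 2) : ℕ) : ℝ)
      ≤ ((leaves H).card : ℝ) - ((∑ v ∈ vbls H, (degV H v - 2) : ℕ) : ℝ)
        + 2 * ((W ∩ vbls U).card : ℝ) + (L.card : ℝ) - (Bd2.card : ℝ) := by
    have : ((leaves U).card : ℤ) - ((∑ v ∈ vbls U, (degV U v - 2) : ℕ) : ℤ)
        ≤ ((leaves H).card : ℤ) - ((∑ v ∈ vbls H, (degV H v - 2) : ℕ) : ℤ)
          + 2 * ((W ∩ vbls U).card : ℤ) + (L.card : ℤ) - (Bd2.card : ℤ) := by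
      rw [e1, e2, e3, e4]
      rw [e5, e7] at key
      linarith [e6, key]
    exact_mod_cast this
  have ckeyR : ((∑ f ∈ consOf H, (degC H f - τ) : ℕ) : ℝ) + (Bd1.card : ℝ)
      ≤ ((∑ f ∈ consOf U, (degC U f - τ) : ℕ) : ℝ) := by
    have : (∑ f ∈ consOf H, (degC H f - τ) : ℕ) + Bd1.card
        ≤ ∑ f ∈ consOf U, (degC U f - τ) := by rw [c1]; exact ckey
    exact_mod_cast this
  have hLs : (L.card : ℝ) ≤ (s : ℝ) := by exact_mod_cast hleaves
  have hWR : ((W ∩ vbls U).card : ℝ) + ((W \ vbls U).card : ℝ) = (W.card : ℝ) := by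
    exact_mod_cast hWsplit
  have hbR : (b : ℝ) = (Bd1.card : ℝ) + (Bd2.card : ℝ) := by exact_mod_cast hb12
  push_cast at hHrev ⊢
  push_cast at keyR ckeyR
  linarith
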